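/- Let D be an integral domain with quotient field K, let A be a D-torsion-free D-algebra, and let w_D(A) be the smallest WPC D-subalgebra of A ⊗_D K containing the image of A. Then w_D satisfies the left adjoint universal property: every D-algebra homomorphism from A to a D-torsion-free WPC D-algebra B extends uniquely to a D-algebra homomorphism w_D(A) → B. -/

import Mathlib

set_option linter.unusedSectionVars false
open Polynomial TensorProduct

variable (D K : Type*) [CommRing D] [IsDomain D] [Field K] [Algebra D K] [IsFractionRing D K]

/-- The ring of integer-valued polynomials `Int(D) ⊆ K[X]`. -/
noncomputable def IntD : Subalgebra D (Polynomial K) :=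
  ⨅ a : D, Subalgebra.comap ((Polynomial.aeval (algebraMap D K a)).restrictScalars D)
    (Algebra.ofId D K).range

theorem mem_IntD {f : Polynomial K} :
    f ∈ IntD D K ↔
      ∀ a : D, ∃ d : D, algebraMap D K d = Polynomial.eval (algebraMap D K a) f := by
  simp [IntD, Algebra.mem_iInf, Subalgebra.mem_comap, Algebra.ofId_apply, Algebra.mem_bot,
    Set.mem_range]

/-- `X` as an element of `Int(D)`. -/
noncomputable def Xint : IntD D K := ⟨Polynomial.X, (mem_IntD D K).mpr fun a => ⟨a, by simp⟩⟩

/-- A `D`-subalgebra of `K ⊗[D] A` is WPC if it is closed under evaluation of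
integer-valued polynomials. -/
def WPCT (A : Type*) [CommRing A] [Algebra D A] (S : Subalgebra D (K ⊗[D] A)) : Prop :=
  ∀ f ∈ IntD D K, ∀ x ∈ S, Polynomial.aeval x f ∈ S

/-- `w_D(A)`: the intersection of all WPC subalgebras of `K ⊗[D] A` containing the image of `A`. -/
noncomputable def wD (A : Type*) [CommRing A] [Algebra D A] : Subalgebra D (K ⊗[D] A) :=
  sInf {S | WPCT D K A S ∧
    (Algebra.TensorProduct.includeRight : A →ₐ[D] K ⊗[D] A).range ≤ S}

/-- The canonical map `A → w_D(A)`, `a ↦ 1 ⊗ a`. -/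
noncomputable def toWD (A : Type*) [CommRing A] [Algebra D A] : A →ₐ[D] wD D K A :=
  AlgHom.codRestrict (Algebra.TensorProduct.includeRight : A →ₐ[D] K ⊗[D] A) (wD D K A)
    (fun a => (Algebra.mem_sInf).mpr fun _ hS => hS.2 (AlgHom.mem_range_self _ a))

/-- `b ↦ 1 ⊗ b` is injective when `B` is `D`-torsion-free. -/
theorem includeRight_injective_aux (B : Type*) [CommRing B] [Algebra D B]
    [NoZeroSMulDivisors D B] :
    Function.Injective (Algebra.TensorProduct.includeRight : B →ₐ[D] K ⊗[D] B) := by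
  have hloc : IsLocalizedModule (nonZeroDivisors D) (TensorProduct.mk D K B 1) :=
    (isLocalizedModule_iff_isBaseChange (nonZeroDivisors D) K _).mpr
      (TensorProduct.isBaseChange D B K)
  intro x y h
  have hz : (TensorProduct.mk D K B 1) (x - y) = 0 := by
    simp only [map_sub]
    simpa using sub_eq_zero.mpr (h : (1 : K) ⊗ₜ[D] x = (1 : K) ⊗ₜ[D] y)
  rw [IsLocalizedModule.eq_zero_iff (nonZeroDivisors D)] at hz
  obtain ⟨s, hs⟩ := hz
  rcases smul_eq_zero.mp hs with h0 | h0
  · exact absurd h0 (nonZeroDivisors.coe_ne_zero s)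
  · exact sub_eq_zero.mp h0

/-- `wD D K A` is itself WPC. -/
theorem wD_wpc (A : Type*) [CommRing A] [Algebra D A] : WPCT D K A (wD D K A) := by
  intro f hf x hx
  rw [wD, Algebra.mem_sInf] at hx ⊢
  intro S hS
  exact hS.1 f hf x (hx S hS)

/-- Key rigidity lemma: any `Φ` extending `ψ` agrees with `id ⊗ ψ`. -/
theorem key_lemma (A : Type*) [CommRing A] [Algebra D A]
    (B : Type*) [CommRing B] [Algebra D B]
    (ψ : A →ₐ[D] B) (Φ : wD D K A →ₐ[D] B) (hΦ : Φ.comp (toWD D K A) = ψ) :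
    ∀ x : wD D K A,
      (1 : K) ⊗ₜ[D] (Φ x) =
        (Algebra.TensorProduct.map (AlgHom.id K K) ψ) (x : K ⊗[D] A) := by
  set ι : B →ₐ[D] K ⊗[D] B := Algebra.TensorProduct.includeRight
  set ψK : K ⊗[D] A →ₐ[K] K ⊗[D] B := Algebra.TensorProduct.map (AlgHom.id K K) ψ with hψK2
  set F₁ : wD D K A →ₐ[D] K ⊗[D] B := ι.comp Φ
  set F₂ : wD D K A →ₐ[D] K ⊗[D] B := (ψK.restrictScalars D).comp (wD D K A).val
  set E : Subalgebra D (wD D K A) := AlgHom.equalizer F₁ F₂ with hE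
  set S : Subalgebra D (K ⊗[D] A) := E.map (wD D K A).val with hSdef
  have hmemS : ∀ x : K ⊗[D] A, x ∈ S ↔ ∃ h : x ∈ wD D K A, F₁ ⟨x, h⟩ = F₂ ⟨x, h⟩ := by
    intro x
    constructor
    · rintro ⟨y, hy, rfl⟩
      exact ⟨y.2, by exact hy⟩
    · rintro ⟨h, hfe⟩
      exact ⟨⟨x, h⟩, hfe, rfl⟩
  have hSin : S ∈ {S | WPCT D K A S ∧
      (Algebra.TensorProduct.includeRight : A →ₐ[D] K ⊗[D] A).range ≤ S} := by
    constructor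
    · -- WPC
      intro f hf x hx
      rw [hmemS] at hx
      obtain ⟨hxw, hxe⟩ := hx
      have hawf : Polynomial.aeval x f ∈ wD D K A := wD_wpc D K A f hf x hxw
      rw [hmemS]
      refine ⟨hawf, ?_⟩
      -- clear denominators of f
      obtain ⟨d, hd⟩ :=
        IsLocalization.integerNormalization_map_to_map (nonZeroDivisors D) f
      set g : Polynomial D := IsLocalization.integerNormalization (nonZeroDivisors D) f
      -- d • aeval x f = aeval x g  (D-algebra evaluation)
      have hdx : (d : D) • Polynomial.aeval x f = Polynomial.aeval x g := by
        rw [← Polynomial.aeval_map_algebraMap K x g, hd, ← algebraMap_smul K (d : D) f,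
          map_smul, algebraMap_smul]
      set y : wD D K A := ⟨x, hxw⟩ with hy
      set z : wD D K A := ⟨Polynomial.aeval x f, hawf⟩ with hz
      have hdz : (d : D) • z = Polynomial.aeval y g := by
        apply Subtype.ext
        have h2 : ((Polynomial.aeval y g : wD D K A) : K ⊗[D] A) = Polynomial.aeval x g :=
          (Polynomial.aeval_algHom_apply (wD D K A).val y g).symm
        rw [h2]
        simpa using hdx
      have hF1 : (d : D) • F₁ z = Polynomial.aeval (F₁ y) g :=
        calc (d : D) • F₁ z = F₁ ((d : D) • z) := (map_smul F₁.toLinearMap (d : D) z).symm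
          _ = F₁ (Polynomial.aeval y g) := by rw [hdz]
          _ = Polynomial.aeval (F₁ y) g := (Polynomial.aeval_algHom_apply F₁ y g).symm
      have hF2 : (d : D) • F₂ z = Polynomial.aeval (F₂ y) g :=
        calc (d : D) • F₂ z = F₂ ((d : D) • z) := (map_smul F₂.toLinearMap (d : D) z).symm
          _ = F₂ (Polynomial.aeval y g) := by rw [hdz]
          _ = Polynomial.aeval (F₂ y) g := (Polynomial.aeval_algHom_apply F₂ y g).symm
      have hsmul : (d : D) • F₁ z = (d : D) • F₂ z := by rw [hF1, hF2, hxe]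
      -- cancel d
      have hdK : algebraMap D K (d : D) ≠ 0 := fun h =>
        nonZeroDivisors.coe_ne_zero d ((injective_iff_map_eq_zero _).mp
          (IsFractionRing.injective D K) _ h)
      have hdu : IsUnit (algebraMap D K (d : D)) := isUnit_iff_ne_zero.mpr hdK
      refine hdu.smul_left_cancel.mp ?_
      rw [algebraMap_smul, algebraMap_smul]
      exact hsmul
    · -- contains the image of A
      rintro x hx
      rw [hmemS]
      obtain ⟨a, rfl⟩ := hx
      refine ⟨(toWD D K A a).2, ?_⟩
      show F₁ (toWD D K A a) = F₂ (toWD D K A a)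
      have h3 : Φ (toWD D K A a) = ψ a := DFunLike.congr_fun hΦ a
      show ι (Φ (toWD D K A a)) = ψK ((1 : K) ⊗ₜ[D] a)
      rw [h3]
      show (1 : K) ⊗ₜ[D] (ψ a) = ψK ((1 : K) ⊗ₜ[D] a)
      rw [hψK2]
      simp
  intro x
  have hle : wD D K A ≤ S := sInf_le hSin
  have := (hmemS (x : K ⊗[D] A)).mp (hle x.2)
  obtain ⟨h, hfe⟩ := this
  have hx : (⟨(x : K ⊗[D] A), h⟩ : wD D K A) = x := Subtype.ext rfl
  rw [hx] at hfe
  exact hfe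

theorem stmt_19 (A : Type*) [CommRing A] [Algebra D A] [NoZeroSMulDivisors D A]
    (B : Type*) [CommRing B] [Algebra D B] [NoZeroSMulDivisors D B]
    (hB : ∀ f ∈ IntD D K, ∀ b : B, ∃ b' : B,
      Polynomial.aeval ((1 : K) ⊗ₜ[D] b) f = (1 : K) ⊗ₜ[D] b')
    (ψ : A →ₐ[D] B) :
    ∃! Φ : wD D K A →ₐ[D] B, Φ.comp (toWD D K A) = ψ := by
  set ι : B →ₐ[D] K ⊗[D] B := Algebra.TensorProduct.includeRight with hι
  have hinj : Function.Injective ι := includeRight_injective_aux D K B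
  set ψK : K ⊗[D] A →ₐ[K] K ⊗[D] B := Algebra.TensorProduct.map (AlgHom.id K K) ψ with hψK
  -- wD lands in the preimage of the image of B
  set S₀ : Subalgebra D (K ⊗[D] A) :=
    Subalgebra.comap (ψK.restrictScalars D) ι.range with hS₀
  have hS₀in : S₀ ∈ {S | WPCT D K A S ∧
      (Algebra.TensorProduct.includeRight : A →ₐ[D] K ⊗[D] A).range ≤ S} := by
    constructor
    · intro f hf x hx
      obtain ⟨b, hb⟩ := hx
      have hb' : ψK x = (1 : K) ⊗ₜ[D] b := hb.symm
      show ψK (Polynomial.aeval x f) ∈ ι.range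
      rw [← Polynomial.aeval_algHom_apply ψK x f, hb']
      obtain ⟨b', hb''⟩ := hB f hf b
      exact ⟨b', hb''.symm⟩
    · rintro x hx
      obtain ⟨a, rfl⟩ := hx
      show ψK ((1 : K) ⊗ₜ[D] a) ∈ ι.range
      exact ⟨ψ a, by rw [hψK, hι]; simp⟩
  have hle : wD D K A ≤ S₀ := sInf_le hS₀in
  set e : B ≃ₐ[D] ι.range := AlgEquiv.ofInjective ι hinj with he
  set Φ : wD D K A →ₐ[D] B :=
    (e.symm.toAlgHom).comp
      (AlgHom.codRestrict ((ψK.restrictScalars D).comp (wD D K A).val) ι.range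
        (fun y => hle y.2)) with hΦdef
  have hΦι : ∀ x : wD D K A, ι (Φ x) = ψK (x : K ⊗[D] A) := by
    intro x
    have : (e (Φ x) : K ⊗[D] B) = ι (Φ x) := rfl
    rw [← this, hΦdef]
    simp only [AlgHom.coe_comp, Function.comp_apply, AlgEquiv.toAlgHom_eq_coe,
      AlgHom.coe_coe]
    exact congrArg Subtype.val (e.apply_symm_apply _)
  have hΦψ : Φ.comp (toWD D K A) = ψ := by
    apply AlgHom.ext
    intro a
    apply hinj
    rw [AlgHom.comp_apply, hΦι (toWD D K A a)]
    show ψK ((1 : K) ⊗ₜ[D] a) = (1 : K) ⊗ₜ[D] (ψ a)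
    simp [hψK]
  refine ⟨Φ, hΦψ, ?_⟩
  intro Φ' hΦ'
  apply AlgHom.ext
  intro x
  apply hinj
  have h1 := key_lemma D K A B ψ Φ' hΦ' x
  have h2 := key_lemma D K A B ψ Φ hΦψ x
  show (1 : K) ⊗ₜ[D] (Φ' x) = (1 : K) ⊗ₜ[D] (Φ x)
  rw [h1, h2]
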